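/- Let γ > 0 and let q : I → ℝ⁴ be differentiable and satisfy the norm-stabilized equations q̇(t) = Φ(q(t)) − γ·(‖q(t)‖² − 1)·q(t), where Φ is the kite quaternion vector field (with possibly time-varying parameters δ(t), l(t) ≠ 0, l̇(t)). Then the function n(t) = ‖q(t)‖² satisfies the scalar differential equation ṅ(t) = −2γ·n(t)·(n(t) − 1). -/

import Mathlib

open RealInnerProductSpace


noncomputable def kitePhi (E vw gk δ l ldot : ℝ) (q : EuclideanSpace ℝ (Fin 4)) :
    EuclideanSpace ℝ (Fin 4) :=
  let va := E * vw * (q 0 ^ 2 + q 1 ^ 2 - q 2 ^ 2 - q 3 ^ 2) - E * ldot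
  (va / (2 * l)) • (WithLp.toLp 2 ![-(q 2), -(q 3), q 0, q 1] : EuclideanSpace ℝ (Fin 4))
    + (vw / l) • (WithLp.toLp 2 ![q 0 * (q 2 ^ 2 + q 3 ^ 2), q 1 * (q 2 ^ 2 + q 3 ^ 2),
        -(q 2) * (q 0 ^ 2 + q 1 ^ 2), -(q 3) * (q 0 ^ 2 + q 1 ^ 2)] :
        EuclideanSpace ℝ (Fin 4))
    + (gk * va * δ / 2) • (WithLp.toLp 2 ![q 1, -(q 0), -(q 3), q 2] : EuclideanSpace ℝ (Fin 4))

lemma kitePhi_inner_self (E vw gk δ l ldot : ℝ) (q : EuclideanSpace ℝ (Fin 4)) :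
    (inner ℝ (kitePhi E vw gk δ l ldot q) q : ℝ) = 0 := by
  simp only [kitePhi, PiLp.inner_apply, RCLike.inner_apply, starRingEnd_apply, star_trivial,
    PiLp.add_apply, PiLp.smul_apply, PiLp.toLp_apply, Pi.add_apply, Pi.smul_apply, smul_eq_mul,
    Fin.sum_univ_four, Matrix.cons_val_zero, Matrix.cons_val_one, Matrix.head_cons,
    Matrix.cons_val_two, Matrix.tail_cons, Matrix.cons_val_three]
  ring

/-- Under the norm-stabilized kite dynamics, `n(t) = ‖q(t)‖²` satisfies the scalar
ODE `ṅ = -2γ n (n - 1)`. -/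
theorem kite_stabilized_norm_ode (E vw gk γ : ℝ) (hγ : 0 < γ) (I : Set ℝ)
    (q : ℝ → EuclideanSpace ℝ (Fin 4)) (l δ ldot : ℝ → ℝ)
    (hl : ∀ t ∈ I, l t ≠ 0)
    (hq : ∀ t ∈ I, HasDerivWithinAt q
      (kitePhi E vw gk (δ t) (l t) (ldot t) (q t)
        - (γ * (‖q t‖ ^ 2 - 1)) • q t) I t) :
    ∀ t ∈ I, HasDerivWithinAt (fun s => ‖q s‖ ^ 2)
      (-2 * γ * ‖q t‖ ^ 2 * (‖q t‖ ^ 2 - 1)) I t := by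
  intro t ht
  have h := (hq t ht).inner ℝ (hq t ht)
  have heq : (fun s => ‖q s‖ ^ 2) = fun s => (inner ℝ (q s) (q s) : ℝ) := by
    funext s
    exact (real_inner_self_eq_norm_sq _).symm
  rw [heq]
  refine h.congr_deriv ?_
  have hz : (inner ℝ (q t) (kitePhi E vw gk (δ t) (l t) (ldot t) (q t)) : ℝ) = 0 := by
    rw [real_inner_comm]; exact kitePhi_inner_self _ _ _ _ _ _ _
  rw [inner_sub_right, inner_sub_left, kitePhi_inner_self, real_inner_smul_left,
    real_inner_smul_right, hz, real_inner_self_eq_norm_sq]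
  ring
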